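/- arXiv:2409.13380 — 4 statements merged into one kernel-verified Lean document; each statement's English description precedes it below -/
import Mathlib

section
/- Let G=(V,E) be a finite simple graph, ω: E → ℚ an edge-weight function, k an integer, and let χ, χ': V → {1,…,c} be c-colorings of G such that χ' is an improving k-neighbor of χ. Then there exists a connected component C of the induced subgraph G[D_flip(χ,χ')] such that the c-coloring χ̃ defined by χ̃(v) := χ'(v) for v ∈ C and χ̃(v) := χ(v) for v ∈ V\C is an improving k-neighbor of χ with D_flip(χ,χ̃) = C. -/
open Finset
open scoped Classical

/-- The finset of properly colored edges of `G` under the coloring `χ`. -/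
noncomputable def properEdges {V : Type*} [Fintype V] {α : Type*}
    (G : SimpleGraph V) (χ : V → α) : Finset (Sym2 V) :=
  G.edgeFinset.filter fun e => ¬ (Sym2.map χ e).IsDiag

/-- The flip between two colorings: the set of vertices where they differ. -/
noncomputable def flipSet {V : Type*} [Fintype V] {α : Type*}
    (χ χ' : V → α) : Finset V :=
  univ.filter fun v => χ v ≠ χ' v

/-- `χ'` is an improving `k`-neighbor of `χ` with respect to the edge
weights `ω`. -/
def IsImprovingKNeighbor {V : Type*} [Fintype V] {c : ℕ}
    (G : SimpleGraph V) (ω : Sym2 V → ℚ) (k : ℕ) (χ χ' : V → Fin c) : Prop :=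
  (flipSet χ χ').card ≤ k ∧
    (∑ e ∈ properEdges G χ, ω e) < (∑ e ∈ properEdges G χ', ω e)

/-- The set of connected components of the subgraph of `G` induced by `S`. -/
noncomputable def componentsOf {V : Type*} [Fintype V] (G : SimpleGraph V)
    (S : Finset V) : Finset ((G.induce (↑S : Set V)).ConnectedComponent) :=
  (Finset.univ : Finset (↑S : Set V)).image
    (G.induce (↑S : Set V)).connectedComponentMk

/-- The vertex set (as a finset of vertices of `G`) of a connected component
of the subgraph of `G` induced by `S`. -/
noncomputable def compVerts {V : Type*} [Fintype V] (G : SimpleGraph V)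
    (S : Finset V) (C : (G.induce (↑S : Set V)).ConnectedComponent) : Finset V :=
  S.filter fun x =>
    ∃ h : x ∈ (↑S : Set V), (G.induce (↑S : Set V)).connectedComponentMk ⟨x, h⟩ = C

lemma mem_compVerts {V : Type*} [Fintype V] (G : SimpleGraph V)
    (S : Finset V) (C : (G.induce (↑S : Set V)).ConnectedComponent) (x : V) :
    x ∈ compVerts G S C ↔
      ∃ h : x ∈ (↑S : Set V),
        (G.induce (↑S : Set V)).connectedComponentMk ⟨x, h⟩ = C := by
  simp only [compVerts, Finset.mem_filter]
  constructor
  · rintro ⟨-, h⟩; exact h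
  · rintro ⟨h1, h2⟩; exact ⟨by exact_mod_cast h1, h1, h2⟩

/-- If `χ'` is an improving `k`-neighbor of `χ`, then there is a connected
component `C` of the subgraph induced by `D_flip(χ,χ')` such that the coloring
agreeing with `χ'` on `C` and with `χ` elsewhere is an improving `k`-neighbor
of `χ` whose flip with `χ` is exactly the vertex set of `C`. -/
theorem exists_component_improving
    {V : Type*} [Fintype V] [DecidableEq V] {c : ℕ}
    (G : SimpleGraph V) (ω : Sym2 V → ℚ) (k : ℕ) (χ χ' : V → Fin c)
    (h : IsImprovingKNeighbor G ω k χ χ') :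
    ∃ C ∈ componentsOf G (flipSet χ χ'),
      IsImprovingKNeighbor G ω k χ
        (fun v => if v ∈ compVerts G (flipSet χ χ') C then χ' v else χ v) ∧
      flipSet χ (fun v => if v ∈ compVerts G (flipSet χ χ') C then χ' v else χ v) =
        compVerts G (flipSet χ χ') C := by
  classical
  obtain ⟨hk, himp⟩ := h
  set D : Finset V := flipSet χ χ' with hDdef
  have hD_mem : ∀ v : V, v ∈ D ↔ χ v ≠ χ' v := by
    intro v; simp [hDdef, flipSet]
  -- shorthand for the candidate colorings
  set χC : (G.induce (↑D : Set V)).ConnectedComponent → V → Fin c :=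
    fun C v => if v ∈ compVerts G D C then χ' v else χ v with hχC
  -- edge-weight indicator
  set g : (V → Fin c) → Sym2 V → ℚ :=
    fun σ e => if (Sym2.map σ e).IsDiag then 0 else ω e with hg
  have hf : ∀ σ : V → Fin c,
      (∑ e ∈ properEdges G σ, ω e) = ∑ e ∈ G.edgeFinset, g σ e := by
    intro σ
    rw [properEdges, Finset.sum_filter]
    refine Finset.sum_congr rfl fun e _ => ?_
    by_cases hd : (Sym2.map σ e).IsDiag <;> simp [hg, hd]
  -- g depends on a coloring only through the endpoints of the edge
  have gcongr : ∀ (σ τ : V → Fin c) (u v : V), σ u = τ u → σ v = τ v →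
      g σ s(u, v) = g τ s(u, v) := by
    intro σ τ u v h1 h2
    simp [hg, Sym2.map_pair_eq, Sym2.isDiag_iff_proj_eq, h1, h2]
  -- membership of flipped vertices in their own component
  have self_mem : ∀ (x : V) (hx : x ∈ D),
      x ∈ compVerts G D ((G.induce (↑D : Set V)).connectedComponentMk ⟨x, hx⟩) := by
    intro x hx
    simp only [compVerts, Finset.mem_filter]
    exact ⟨hx, hx, by simp⟩
  have comp_mem : ∀ (x : V) (hx : x ∈ D),
      (G.induce (↑D : Set V)).connectedComponentMk ⟨x, hx⟩ ∈ componentsOf G D :=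
    fun x hx => Finset.mem_image.mpr ⟨⟨x, hx⟩, Finset.mem_univ _, rfl⟩
  -- uniqueness: x lies in compVerts C only for its own component
  have unique_comp : ∀ (x : V) (C : (G.induce (↑D : Set V)).ConnectedComponent),
      x ∈ compVerts G D C → ∀ hx : x ∈ D,
        C = (G.induce (↑D : Set V)).connectedComponentMk ⟨x, hx⟩ := by
    intro x C hxC hx
    simp only [compVerts, Finset.mem_filter] at hxC
    obtain ⟨-, h1, h2⟩ := hxC
    exact h2.symm
  have cv_subset : ∀ C, compVerts G D C ⊆ D := by
    intro C x hx
    simp only [compVerts, Finset.mem_filter] at hx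
    exact hx.1
  -- not in D means colorings agree
  have agree : ∀ v : V, v ∉ D → χ v = χ' v := by
    intro v hv; by_contra hne; exact hv ((hD_mem v).mpr hne)
  -- adjacency inside D forces same component
  have adj_same : ∀ (u v : V) (hu : u ∈ D) (hv : v ∈ D), G.Adj u v →
      (G.induce (↑D : Set V)).connectedComponentMk ⟨u, hu⟩ =
        (G.induce (↑D : Set V)).connectedComponentMk ⟨v, hv⟩ := by
    intro u v hu hv hadj
    have : (G.induce (↑D : Set V)).Adj ⟨u, hu⟩ ⟨v, hv⟩ := by
      simp only [SimpleGraph.comap_adj, Function.Embedding.coe_subtype]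
      exact hadj
    exact SimpleGraph.ConnectedComponent.sound this.reachable
  -- the per-edge telescoping identity
  have key : ∀ e ∈ G.edgeFinset,
      (∑ C ∈ componentsOf G D, (g (χC C) e - g χ e)) = g χ' e - g χ e := by
    intro e he
    induction e using Sym2.ind with
    | _ u v =>
      have hadj : G.Adj u v := by simpa [SimpleGraph.mem_edgeFinset] using he
      by_cases hu : u ∈ D
      · -- u flipped; let C₀ be its component
        set C₀ := (G.induce (↑D : Set V)).connectedComponentMk ⟨u, hu⟩ with hC₀
        have hzero : ∀ C ∈ componentsOf G D, C ≠ C₀ → g (χC C) s(u, v) - g χ s(u, v) = 0 := by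
          intro C _ hne
          have hun : u ∉ compVerts G D C := by
            intro hmem
            exact hne (unique_comp u C hmem hu)
          have hvn : v ∉ compVerts G D C := by
            intro hmem
            by_cases hv : v ∈ D
            · have h1 := unique_comp v C hmem hv
              have h2 := adj_same u v hu hv hadj
              exact hne (h1.trans h2.symm)
            · exact hv (cv_subset C hmem)
          have : g (χC C) s(u, v) = g χ s(u, v) :=
            gcongr _ _ u v (by simp [hχC, hun]) (by simp [hχC, hvn])
          simp [this]
        rw [Finset.sum_eq_single_of_mem C₀ (comp_mem u hu) hzero]
        have huC : u ∈ compVerts G D C₀ := self_mem u hu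
        have hval : g (χC C₀) s(u, v) = g χ' s(u, v) := by
          refine gcongr _ _ u v (by simp [hχC, huC]) ?_
          by_cases hv : v ∈ D
          · have hvC : v ∈ compVerts G D C₀ := by
              have := adj_same u v hu hv hadj
              rw [hC₀, this]
              exact self_mem v hv
            simp [hχC, hvC]
          · have hvn : v ∉ compVerts G D C₀ := fun hmem => hv (cv_subset C₀ hmem)
            simp [hχC, hvn, agree v hv]
        rw [hval]
      · by_cases hv : v ∈ D
        · -- v flipped, u not
          set C₀ := (G.induce (↑D : Set V)).connectedComponentMk ⟨v, hv⟩ with hC₀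
          have hzero : ∀ C ∈ componentsOf G D, C ≠ C₀ → g (χC C) s(u, v) - g χ s(u, v) = 0 := by
            intro C _ hne
            have hun : u ∉ compVerts G D C := fun hmem => hu (cv_subset C hmem)
            have hvn : v ∉ compVerts G D C := by
              intro hmem
              exact hne (unique_comp v C hmem hv)
            have : g (χC C) s(u, v) = g χ s(u, v) :=
              gcongr _ _ u v (by simp [hχC, hun]) (by simp [hχC, hvn])
            simp [this]
          rw [Finset.sum_eq_single_of_mem C₀ (comp_mem v hv) hzero]
          have hvC : v ∈ compVerts G D C₀ := self_mem v hv
          have hun : u ∉ compVerts G D C₀ := fun hmem => hu (cv_subset C₀ hmem)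
          have hval : g (χC C₀) s(u, v) = g χ' s(u, v) :=
            gcongr _ _ u v (by simp [hχC, hun, agree u hu]) (by simp [hχC, hvC])
          rw [hval]
        · -- neither endpoint flipped
          have h1 : g χ' s(u, v) = g χ s(u, v) :=
            gcongr _ _ u v (agree u hu).symm (agree v hv).symm
          have hzero : ∀ C ∈ componentsOf G D, g (χC C) s(u, v) - g χ s(u, v) = 0 := by
            intro C _
            have hun : u ∉ compVerts G D C := fun hmem => hu (cv_subset C hmem)
            have hvn : v ∉ compVerts G D C := fun hmem => hv (cv_subset C hmem)
            have : g (χC C) s(u, v) = g χ s(u, v) :=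
              gcongr _ _ u v (by simp [hχC, hun]) (by simp [hχC, hvn])
            simp [this]
          rw [Finset.sum_congr rfl hzero, Finset.sum_const_zero, h1, sub_self]
  -- total telescoping
  have total : ∑ C ∈ componentsOf G D,
      ((∑ e ∈ properEdges G (χC C), ω e) - ∑ e ∈ properEdges G χ, ω e)
      = (∑ e ∈ properEdges G χ', ω e) - (∑ e ∈ properEdges G χ, ω e) := by
    have : ∀ C, (∑ e ∈ properEdges G (χC C), ω e) - ∑ e ∈ properEdges G χ, ω e
        = ∑ e ∈ G.edgeFinset, (g (χC C) e - g χ e) := by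
      intro C
      rw [hf, hf, Finset.sum_sub_distrib]
    simp_rw [this]
    rw [Finset.sum_comm]
    rw [Finset.sum_congr rfl key, Finset.sum_sub_distrib, ← hf, ← hf]
  -- pick an improving component
  have hlt : (∑ C ∈ componentsOf G D, (0 : ℚ)) < ∑ C ∈ componentsOf G D,
      ((∑ e ∈ properEdges G (χC C), ω e) - ∑ e ∈ properEdges G χ, ω e) := by
    rw [Finset.sum_const_zero, total]
    exact sub_pos.mpr himp
  obtain ⟨C, hC, hpos⟩ := Finset.exists_lt_of_sum_lt hlt
  refine ⟨C, hC, ⟨?_, ?_⟩, ?_⟩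
  · -- flip cardinality bound
    have hflip : flipSet χ (χC C) = compVerts G D C := by
      ext v
      simp only [flipSet, Finset.mem_filter, Finset.mem_univ, true_and]
      by_cases hv : v ∈ compVerts G D C
      · simp only [hχC, hv, if_pos]
        have : χ v ≠ χ' v := (hD_mem v).mp (cv_subset C hv)
        simpa [hv] using this
      · simp [hχC, hv]
    rw [show (fun v => if v ∈ compVerts G (flipSet χ χ') C then χ' v else χ v) = χC C from rfl,
      hflip]
    exact le_trans (Finset.card_le_card (cv_subset C)) hk
  · exact sub_pos.mp hpos
  · ext v
    simp only [flipSet, Finset.mem_filter, Finset.mem_univ, true_and]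
    by_cases hv : v ∈ compVerts G D C
    · have : χ v ≠ χ' v := (hD_mem v).mp (cv_subset C hv)
      simpa [hv] using this
    · simp [hv]
end

section
/- Let G=(V,E) be a finite simple graph, ω: E → ℚ an edge-weight function, k an integer, and χ: V → {1,…,c} a c-coloring of G. Then for every inclusion-minimal improving k-neighbor χ' of χ, the vertex set D_flip(χ,χ') is connected in G, i.e., the induced subgraph G[D_flip(χ,χ')] is connected. -/
open Finset
open scoped Classical

lemma flipSet_mix {V : Type*} [Fintype V] [DecidableEq V] {α : Type*} (χ χ' : V → α)
    (S : Finset V) (hS : S ⊆ flipSet χ χ') :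
    flipSet χ (fun v => if v ∈ S then χ' v else χ v) = S := by
  ext v
  simp only [flipSet, mem_filter, mem_univ, true_and]
  by_cases hv : v ∈ S
  · have := (mem_filter.mp (hS hv)).2
    simpa [hv] using this
  · simp [hv]

lemma properSum_eq {V : Type*} [Fintype V] {α : Type*}
    (G : SimpleGraph V) (ω : Sym2 V → ℚ) (f : V → α) :
    (∑ e ∈ properEdges G f, ω e)
      = ∑ e ∈ G.edgeFinset, if ¬ (Sym2.map f e).IsDiag then ω e else 0 := by
  rw [properEdges, sum_filter]

lemma split_sum {V : Type*} [Fintype V] {α : Type*} [DecidableEq V]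
    (G : SimpleGraph V) (ω : Sym2 V → ℚ) (χ χ' : V → α)
    (S T : Finset V)
    (hdisj : ∀ v, v ∈ S → v ∈ T → False)
    (hout : ∀ v, v ∉ S → v ∉ T → χ v = χ' v)
    (hno : ∀ a ∈ S, ∀ b ∈ T, ¬ G.Adj a b) :
    (∑ e ∈ properEdges G (fun v => if v ∈ S then χ' v else χ v), ω e)
      + (∑ e ∈ properEdges G (fun v => if v ∈ T then χ' v else χ v), ω e)
      = (∑ e ∈ properEdges G χ', ω e) + (∑ e ∈ properEdges G χ, ω e) := by
  set χS : V → α := fun v => if v ∈ S then χ' v else χ v with hχS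
  set χT : V → α := fun v => if v ∈ T then χ' v else χ v with hχT
  rw [properSum_eq, properSum_eq, properSum_eq, properSum_eq, ← sum_add_distrib,
    ← sum_add_distrib]
  refine sum_congr rfl ?_
  intro e he
  have he' : e ∈ G.edgeSet := SimpleGraph.mem_edgeFinset.mp he
  induction e using Sym2.ind with
  | _ a b =>
    have hab : G.Adj a b := he'
    have key : (χS a = χ' a ∧ χS b = χ' b ∧ χT a = χ a ∧ χT b = χ b) ∨
        (χS a = χ a ∧ χS b = χ b ∧ χT a = χ' a ∧ χT b = χ' b) := by
      by_cases haS : a ∈ S <;> by_cases hbS : b ∈ S <;>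
        by_cases haT : a ∈ T <;> by_cases hbT : b ∈ T
      all_goals first
        | exact absurd haT (fun h => hdisj a haS h)
        | exact absurd hbT (fun h => hdisj b hbS h)
        | exact absurd hab (hno a haS b hbT)
        | exact absurd hab.symm (hno b hbS a haT)
        | (left; refine ⟨?_, ?_, ?_, ?_⟩ <;>
            simp only [hχS, hχT, if_pos, if_neg, haS, hbS, haT, hbT, if_true, if_false] <;>
            first | rfl | exact hout _ ‹_› ‹_›)
        | (right; refine ⟨?_, ?_, ?_, ?_⟩ <;>
            simp only [hχS, hχT, if_pos, if_neg, haS, hbS, haT, hbT, if_true, if_false] <;>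
            first | rfl | exact hout _ ‹_› ‹_›)
    simp only [Sym2.map_pair_eq, Sym2.isDiag_iff_proj_eq]
    rcases key with ⟨h1, h2, h3, h4⟩ | ⟨h1, h2, h3, h4⟩
    · rw [h1, h2, h3, h4]
    · rw [h1, h2, h3, h4, add_comm]

/-- For every inclusion-minimal improving `k`-neighbor `χ'` of `χ`, the flip
`D_flip(χ,χ')` induces a connected subgraph of `G`. -/
theorem flip_of_minimal_improving_connected
    {V : Type*} [Fintype V] [DecidableEq V] {c : ℕ}
    (G : SimpleGraph V) (ω : Sym2 V → ℚ) (k : ℕ) (χ χ' : V → Fin c)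
    (himp : IsImprovingKNeighbor G ω k χ χ')
    (hmin : ∀ χ'' : V → Fin c, IsImprovingKNeighbor G ω k χ χ'' →
      ¬ flipSet χ χ'' ⊂ flipSet χ χ') :
    (G.induce (↑(flipSet χ χ') : Set V)).Connected := by
  set D : Finset V := flipSet χ χ' with hD
  -- D is nonempty
  have hDne : D.Nonempty := by
    by_contra h
    have hDe : D = ∅ := not_nonempty_iff_eq_empty.mp h
    have : χ = χ' := by
      funext v
      by_contra hv
      have : v ∈ D := by simp [hD, flipSet, hv]
      simp [hDe] at this
    rw [this] at himp
    exact lt_irrefl _ himp.2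
  obtain ⟨u, hu⟩ := hDne
  have huD : u ∈ (↑D : Set V) := hu
  -- the reachable part of D from u
  set S : Finset V := D.filter (fun w => ∃ hw : w ∈ (↑D : Set V),
    (G.induce (↑D : Set V)).Reachable ⟨u, huD⟩ ⟨w, hw⟩) with hSdef
  have huS : u ∈ S := by
    refine mem_filter.mpr ⟨hu, ⟨huD, SimpleGraph.Reachable.refl _⟩⟩
  have hSD : S ⊆ D := filter_subset _ _
  -- key: S = D
  have hSeq : S = D := by
    by_contra hne
    have hSsub : S ⊂ D := ssubset_of_subset_of_ne hSD hne
    set T : Finset V := D \ S with hT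
    have hTne : T.Nonempty := by
      obtain ⟨x, hxD, hxS⟩ := exists_of_ssubset hSsub
      exact ⟨x, mem_sdiff.mpr ⟨hxD, hxS⟩⟩
    have hTD : T ⊆ D := sdiff_subset
    have hdisj : ∀ v, v ∈ S → v ∈ T → False := by
      intro v hvS hvT
      exact (mem_sdiff.mp hvT).2 hvS
    have hout : ∀ v, v ∉ S → v ∉ T → χ v = χ' v := by
      intro v hvS hvT
      by_contra hv
      have hvD : v ∈ D := by simp [hD, flipSet, hv]
      exact hvT (mem_sdiff.mpr ⟨hvD, hvS⟩)
    have hno : ∀ a ∈ S, ∀ b ∈ T, ¬ G.Adj a b := by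
      intro a haS b hbT hab
      have haD : a ∈ D := hSD haS
      have hbD : b ∈ D := hTD hbT
      obtain ⟨_, hra⟩ := (mem_filter.mp haS).2
      have hadj : (G.induce (↑D : Set V)).Adj ⟨a, haD⟩ ⟨b, hbD⟩ := by
        simpa using hab
      have hrb : (G.induce (↑D : Set V)).Reachable ⟨u, huD⟩ ⟨b, hbD⟩ := by
        exact SimpleGraph.Reachable.trans hra hadj.reachable
      exact (mem_sdiff.mp hbT).2 (mem_filter.mpr ⟨hbD, ⟨hbD, hrb⟩⟩)
    have hsum := split_sum G ω χ χ' S T hdisj hout hno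
    set χS : V → Fin c := fun v => if v ∈ S then χ' v else χ v with hχS
    set χT : V → Fin c := fun v => if v ∈ T then χ' v else χ v with hχT
    have hfS : flipSet χ χS = S := by rw [hχS]; exact flipSet_mix χ χ' S hSD
    have hfT : flipSet χ χT = T := by rw [hχT]; exact flipSet_mix χ χ' T hTD
    -- one of them is improving
    have himp2 := himp.2
    have hcases : (∑ e ∈ properEdges G χ, ω e) < (∑ e ∈ properEdges G χS, ω e) ∨
        (∑ e ∈ properEdges G χ, ω e) < (∑ e ∈ properEdges G χT, ω e) := by
      by_contra h
      push_neg at h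
      have := add_le_add h.1 h.2
      rw [hsum] at this
      linarith
    have hTsub : T ⊂ D := by
      refine ssubset_of_subset_of_ne hTD ?_
      intro h
      have : u ∈ T := h ▸ hu
      exact (mem_sdiff.mp this).2 huS
    rcases hcases with h | h
    · exact hmin χS ⟨by rw [hfS]; exact le_trans (card_le_card hSD) himp.1, h⟩
        (by rw [hfS]; exact hSsub)
    · exact hmin χT ⟨by rw [hfT]; exact le_trans (card_le_card hTD) himp.1, h⟩
        (by rw [hfT]; exact hTsub)
  -- conclude connectivity
  rw [SimpleGraph.connected_iff]
  constructor
  · intro x y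
    have hx : (x : V) ∈ S := by rw [hSeq]; exact x.2
    have hy : (y : V) ∈ S := by rw [hSeq]; exact y.2
    obtain ⟨_, hrx⟩ := (mem_filter.mp hx).2
    obtain ⟨_, hry⟩ := (mem_filter.mp hy).2
    have hx' : (⟨(x : V), _⟩ : (↑D : Set V)) = x := Subtype.ext rfl
    have hy' : (⟨(y : V), _⟩ : (↑D : Set V)) = y := Subtype.ext rfl
    exact (hx' ▸ hrx).symm.trans (hy' ▸ hry)
  · exact ⟨⟨u, huD⟩⟩
end

section
/- Let G=(V,E) be a finite simple graph, ω: E → ℚ an edge-weight function, and k a positive integer. Let χ and χ' be (k−1)-optimal c-colorings of G and let v ∈ V be a vertex whose distance in G to every vertex of D_flip(χ,χ') is at least k+1. If there is no improving k-neighbor χ̂ of χ with v ∈ D_flip(χ,χ̂), then there is no improving k-neighbor χ̃ of χ' with v ∈ D_flip(χ',χ̃). -/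
open Finset
open scoped Classical

lemma mem_flipSet {V : Type*} [Fintype V] {α : Type*}
    (χ χ' : V → α) (x : V) : x ∈ flipSet χ χ' ↔ χ x ≠ χ' x := by
  simp [flipSet]

lemma sum4 {V : Type*} [Fintype V] {α : Type*}
    (G : SimpleGraph V) (ω : Sym2 V → ℚ) (a b cc d : V → α)
    (h : ∀ e ∈ G.edgeFinset,
      (Sym2.map a e = Sym2.map cc e ∧ Sym2.map b e = Sym2.map d e) ∨
      (Sym2.map a e = Sym2.map d e ∧ Sym2.map b e = Sym2.map cc e)) :
    (∑ e ∈ properEdges G a, ω e) + (∑ e ∈ properEdges G b, ω e) =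
      (∑ e ∈ properEdges G cc, ω e) + (∑ e ∈ properEdges G d, ω e) := by
  unfold properEdges
  rw [Finset.sum_filter, Finset.sum_filter, Finset.sum_filter, Finset.sum_filter,
    ← Finset.sum_add_distrib, ← Finset.sum_add_distrib]
  apply Finset.sum_congr rfl
  intro e he
  rcases h e he with ⟨h1, h2⟩ | ⟨h1, h2⟩ <;> rw [h1, h2]
  exact add_comm _ _

/-- Let `χ` and `χ'` be `(k-1)`-optimal colorings and let `v` be a vertex of
distance at least `k+1` from every vertex of `D_flip(χ,χ')` (this includes
the case that no path exists). If no improving `k`-neighbor of `χ` flips `v`,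
then no improving `k`-neighbor of `χ'` flips `v`. -/
theorem redundant_flip_prevention
    {V : Type*} [Fintype V] [DecidableEq V] {c : ℕ}
    (G : SimpleGraph V) (ω : Sym2 V → ℚ) (k : ℕ) (hk : 1 ≤ k)
    (χ χ' : V → Fin c)
    (hχ : ¬ ∃ ρ : V → Fin c, IsImprovingKNeighbor G ω (k - 1) χ ρ)
    (hχ' : ¬ ∃ ρ : V → Fin c, IsImprovingKNeighbor G ω (k - 1) χ' ρ)
    (v : V)
    (hdist : ∀ w ∈ flipSet χ χ', ¬ G.Reachable v w ∨ k + 1 ≤ G.dist v w)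
    (hnone : ¬ ∃ ρ : V → Fin c, IsImprovingKNeighbor G ω k χ ρ ∧ v ∈ flipSet χ ρ) :
    ¬ ∃ ρ : V → Fin c, IsImprovingKNeighbor G ω k χ' ρ ∧ v ∈ flipSet χ' ρ := by
  rintro ⟨χt, ⟨hcard, himp⟩, hvflip⟩
  have hvne : χ' v ≠ χt v := (mem_flipSet _ _ _).mp hvflip
  -- distance triangle step
  have hstep : ∀ a b : V, G.Adj a b → G.Reachable v a →
      G.Reachable v b ∧ G.dist v b ≤ G.dist v a + 1 := by
    intro a b hab hra
    refine ⟨hra.trans hab.reachable, ?_⟩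
    obtain ⟨p, hp⟩ := hra.exists_walk_length_eq_dist
    have := SimpleGraph.dist_le (p.concat hab)
    rwa [SimpleGraph.Walk.length_concat, hp] at this
  -- pigeonhole: a radius r in [1,k] avoided by all distances to the flip set
  obtain ⟨r, hr1, hrk, hrF⟩ :
      ∃ r, 1 ≤ r ∧ r ≤ k ∧ ∀ w ∈ flipSet χ' χt, G.dist v w ≠ r := by
    by_contra h
    push_neg at h
    have hsub : insert 0 (Finset.Icc 1 k) ⊆
        (flipSet χ' χt).image (fun w => G.dist v w) := by
      intro r hr
      rcases Finset.mem_insert.mp hr with rfl | hr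
      · exact Finset.mem_image.mpr ⟨v, hvflip, by simp [SimpleGraph.dist_self]⟩
      · obtain ⟨w, hwF, hw⟩ := h r (Finset.mem_Icc.mp hr).1 (Finset.mem_Icc.mp hr).2
        exact Finset.mem_image.mpr ⟨w, hwF, hw⟩
    have h1 := Finset.card_le_card hsub
    rw [Finset.card_insert_of_notMem (by simp)] at h1
    have h2 := Finset.card_image_le (s := flipSet χ' χt) (f := fun w => G.dist v w)
    simp only [Nat.card_Icc] at h1
    omega
  -- the "near" region
  set N : V → Prop := fun x => G.Reachable v x ∧ G.dist v x < r with hN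
  have hNv : N v := ⟨SimpleGraph.Reachable.refl v, by rw [SimpleGraph.dist_self]; omega⟩
  -- χ and χ' agree near v
  have hag : ∀ x, G.Reachable v x → G.dist v x ≤ k → χ x = χ' x := by
    intro x hrx hdx
    by_contra hne
    have hx : x ∈ flipSet χ χ' := (mem_flipSet _ _ _).mpr hne
    rcases hdist x hx with h | h
    · exact h hrx
    · omega
  have hagN : ∀ x, N x → χ x = χ' x := fun x hx => hag x hx.1 (by have := hx.2; omega)
  have hagNb : ∀ a b, G.Adj a b → N a → χ b = χ' b := by
    intro a b hab hNa
    obtain ⟨hrb, hdb⟩ := hstep a b hab hNa.1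
    have := hNa.2
    exact hag b hrb (by omega)
  -- key fact: a vertex outside the near region adjacent to it is not flipped
  have hKey : ∀ a b, G.Adj a b → N a → ¬ N b → χt b = χ' b := by
    intro a b hab hNa hnb
    by_contra hne
    have hbF : b ∈ flipSet χ' χt := (mem_flipSet _ _ _).mpr (fun h => hne h.symm)
    obtain ⟨hrb, hdb⟩ := hstep a b hab hNa.1
    have hda := hNa.2
    have : ¬ G.dist v b < r := fun h => hnb ⟨hrb, h⟩
    exact hrF b hbF (by omega)
  set ρ₁ : V → Fin c := fun x => if N x then χt x else χ' x with hρ₁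
  set ρ₂ : V → Fin c := fun x => if N x then χ' x else χt x with hρ₂
  set ρ : V → Fin c := fun x => if N x then χt x else χ x with hρ
  have hρ₁N : ∀ x, N x → ρ₁ x = χt x := fun x hx => if_pos hx
  have hρ₁n : ∀ x, ¬ N x → ρ₁ x = χ' x := fun x hx => if_neg hx
  have hρ₂N : ∀ x, N x → ρ₂ x = χ' x := fun x hx => if_pos hx
  have hρ₂n : ∀ x, ¬ N x → ρ₂ x = χt x := fun x hx => if_neg hx
  have hρN : ∀ x, N x → ρ x = χt x := fun x hx => if_pos hx
  have hρn : ∀ x, ¬ N x → ρ x = χ x := fun x hx => if_neg hx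
  -- decomposition
  have hdec := sum4 G ω χt χ' ρ₁ ρ₂ (by
    intro e he
    induction e using Sym2.ind with
    | _ a b =>
      have hab : G.Adj a b := by
        rw [SimpleGraph.mem_edgeFinset, SimpleGraph.mem_edgeSet] at he; exact he
      simp only [Sym2.map_pair_eq]
      by_cases hNa : N a <;> by_cases hNb : N b
      · left
        rw [hρ₁N a hNa, hρ₁N b hNb, hρ₂N a hNa, hρ₂N b hNb]
        exact ⟨rfl, rfl⟩
      · have hb := hKey a b hab hNa hNb
        left
        rw [hρ₁N a hNa, hρ₁n b hNb, hρ₂N a hNa, hρ₂n b hNb, hb]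
        exact ⟨rfl, rfl⟩
      · have ha := hKey b a hab.symm hNb hNa
        left
        rw [hρ₁n a hNa, hρ₁N b hNb, hρ₂n a hNa, hρ₂N b hNb, ha]
        exact ⟨rfl, rfl⟩
      · right
        rw [hρ₁n a hNa, hρ₁n b hNb, hρ₂n a hNa, hρ₂n b hNb]
        exact ⟨rfl, rfl⟩)
  -- transfer
  have htr := sum4 G ω ρ χ' ρ₁ χ (by
    intro e he
    induction e using Sym2.ind with
    | _ a b =>
      have hab : G.Adj a b := by
        rw [SimpleGraph.mem_edgeFinset, SimpleGraph.mem_edgeSet] at he; exact he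
      simp only [Sym2.map_pair_eq]
      by_cases hNa : N a <;> by_cases hNb : N b
      · left
        rw [hρN a hNa, hρN b hNb, hρ₁N a hNa, hρ₁N b hNb,
          hagN a hNa, hagN b hNb]
        exact ⟨rfl, rfl⟩
      · have hb := hagNb a b hab hNa
        left
        rw [hρN a hNa, hρn b hNb, hρ₁N a hNa, hρ₁n b hNb,
          hagN a hNa, hb]
        exact ⟨rfl, rfl⟩
      · have ha := hagNb b a hab.symm hNb
        left
        rw [hρn a hNa, hρN b hNb, hρ₁n a hNa, hρ₁N b hNb,
          hagN b hNb, ha]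
        exact ⟨rfl, rfl⟩
      · right
        rw [hρn a hNa, hρn b hNb, hρ₁n a hNa, hρ₁n b hNb]
        exact ⟨rfl, rfl⟩)
  -- ρ₂ is a (k-1)-neighbor of χ'
  have hcard2 : (flipSet χ' ρ₂).card ≤ k - 1 := by
    have hsub : flipSet χ' ρ₂ ⊆ (flipSet χ' χt).erase v := by
      intro x hx
      have hx' : χ' x ≠ ρ₂ x := (mem_flipSet _ _ _).mp hx
      have hnx : ¬ N x := fun hNx => hx' (hρ₂N x hNx).symm
      rw [hρ₂n x hnx] at hx'
      exact Finset.mem_erase.mpr ⟨fun h => hnx (h ▸ hNv), (mem_flipSet _ _ _).mpr hx'⟩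
    have h1 := Finset.card_le_card hsub
    have h2 : ((flipSet χ' χt).erase v).card = (flipSet χ' χt).card - 1 :=
      Finset.card_erase_of_mem hvflip
    have h3 : 1 ≤ (flipSet χ' χt).card := Finset.card_pos.mpr ⟨v, hvflip⟩
    omega
  -- hence ρ₂ is not improving over χ'
  have hρ₂le : (∑ e ∈ properEdges G ρ₂, ω e) ≤ (∑ e ∈ properEdges G χ', ω e) := by
    by_contra hlt
    push_neg at hlt
    exact hχ' ⟨ρ₂, hcard2, hlt⟩
  -- so ρ₁ is improving, and then ρ improves over χ
  have hρimp : (∑ e ∈ properEdges G χ, ω e) < (∑ e ∈ properEdges G ρ, ω e) := by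
    linarith
  have hcardρ : (flipSet χ ρ).card ≤ k := by
    have hsub : flipSet χ ρ ⊆ flipSet χ' χt := by
      intro x hx
      have hx' : χ x ≠ ρ x := (mem_flipSet _ _ _).mp hx
      have hNx : N x := by
        by_contra hnx; exact hx' (hρn x hnx).symm
      rw [hρN x hNx, hagN x hNx] at hx'
      exact (mem_flipSet _ _ _).mpr hx'
    exact le_trans (Finset.card_le_card hsub) hcard
  have hvρ : v ∈ flipSet χ ρ := by
    refine (mem_flipSet _ _ _).mpr ?_
    rw [hagN v hNv, hρN v hNv]
    exact hvne
  exact hnone ⟨ρ, ⟨hcardρ, hρimp⟩, hvρ⟩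
end

section
/- Let G=(V,E) be a finite simple graph, ω: E → ℚ an edge-weight function, and k a positive integer. Let χ be a c-coloring of G and let v, w ∈ V be weighted twins (i.e., N(v)\{w} = N(w)\{v} and ω({v,x}) = ω({w,x}) for every x ∈ N(v)\{w}) with χ(v) = χ(w). If there is no improving k-neighbor χ' of χ with v ∈ D_flip(χ,χ'), then there is no improving k-neighbor χ̃ of χ with w ∈ D_flip(χ,χ̃). -/
open Finset
open scoped Classical

/-- Let `v` and `w` be weighted twins with `χ v = χ w`. If no improving
`k`-neighbor of `χ` flips `v`, then no improving `k`-neighbor of `χ`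
flips `w`. -/
theorem weighted_twins_redundant
    {V : Type*} [Fintype V] [DecidableEq V] {c : ℕ}
    (G : SimpleGraph V) [DecidableRel G.Adj] (ω : Sym2 V → ℚ)
    (k : ℕ) (hk : 1 ≤ k) (χ : V → Fin c)
    (v w : V)
    (htwinN : G.neighborFinset v \ {w} = G.neighborFinset w \ {v})
    (htwinω : ∀ x ∈ G.neighborFinset v \ {w}, ω s(v, x) = ω s(w, x))
    (hcol : χ v = χ w)
    (hnone : ¬ ∃ χ' : V → Fin c, IsImprovingKNeighbor G ω k χ χ' ∧ v ∈ flipSet χ χ') :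
    ¬ ∃ χt : V → Fin c, IsImprovingKNeighbor G ω k χ χt ∧ w ∈ flipSet χ χt := by
  rintro ⟨χt, ⟨hcard, hsum⟩, hw⟩
  apply hnone
  set σ := Equiv.swap v w with hσ
  have hσσ : ∀ x, σ (σ x) = x := fun x => Equiv.swap_apply_self v w x
  have hχσ : ∀ x, χ (σ x) = χ x := by
    intro x
    rcases eq_or_ne x v with rfl | hxv
    · simp [hσ, Equiv.swap_apply_left, hcol]
    rcases eq_or_ne x w with rfl | hxw
    · simp [hσ, Equiv.swap_apply_right, hcol]
    · simp [hσ, Equiv.swap_apply_of_ne_of_ne hxv hxw]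
  have h1 : ∀ x, x ≠ v → x ≠ w → (G.Adj v x ↔ G.Adj w x) := by
    intro x hxv hxw
    constructor
    · intro h
      have hx : x ∈ G.neighborFinset v \ {w} := by
        simp [SimpleGraph.mem_neighborFinset, h, hxw]
      rw [htwinN] at hx
      simpa [SimpleGraph.mem_neighborFinset] using (Finset.mem_sdiff.mp hx).1
    · intro h
      have hx : x ∈ G.neighborFinset w \ {v} := by
        simp [SimpleGraph.mem_neighborFinset, h, hxv]
      rw [← htwinN] at hx
      simpa [SimpleGraph.mem_neighborFinset] using (Finset.mem_sdiff.mp hx).1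
  have hadj1 : ∀ a b : V, G.Adj a b → G.Adj (σ a) (σ b) := by
    intro a b hab
    rcases eq_or_ne a v with haveq | hav
    · rw [haveq] at hab ⊢
      rcases eq_or_ne b w with hbweq | hbw
      · rw [hbweq] at hab ⊢
        simpa [hσ, Equiv.swap_apply_left, Equiv.swap_apply_right] using hab.symm
      · have hbv : b ≠ v := fun h => G.irrefl (h ▸ hab)
        simp only [hσ, Equiv.swap_apply_left, Equiv.swap_apply_of_ne_of_ne hbv hbw]
        exact (h1 b hbv hbw).mp hab
    rcases eq_or_ne a w with haweq | haw
    · rw [haweq] at hab ⊢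
      rcases eq_or_ne b v with hbveq | hbv
      · rw [hbveq] at hab ⊢
        simpa [hσ, Equiv.swap_apply_left, Equiv.swap_apply_right] using hab.symm
      · have hbw : b ≠ w := fun h => G.irrefl (h ▸ hab)
        simp only [hσ, Equiv.swap_apply_right, Equiv.swap_apply_of_ne_of_ne hbv hbw]
        exact (h1 b hbv hbw).mpr hab
    rcases eq_or_ne b v with hbveq | hbv
    · rw [hbveq] at hab ⊢
      simp only [hσ, Equiv.swap_apply_left, Equiv.swap_apply_of_ne_of_ne hav haw]
      exact ((h1 a hav haw).mp hab.symm).symm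
    rcases eq_or_ne b w with hbweq | hbw
    · rw [hbweq] at hab ⊢
      simp only [hσ, Equiv.swap_apply_right, Equiv.swap_apply_of_ne_of_ne hav haw]
      exact ((h1 a hav haw).mpr hab.symm).symm
    · simpa [hσ, Equiv.swap_apply_of_ne_of_ne hav haw,
        Equiv.swap_apply_of_ne_of_ne hbv hbw] using hab
  have hadj : ∀ a b : V, G.Adj (σ a) (σ b) ↔ G.Adj a b := by
    intro a b
    constructor
    · intro h
      have := hadj1 _ _ h
      simpa [hσσ] using this
    · exact hadj1 a b
  have hkey1 : ∀ b, b ≠ v → b ≠ w → G.Adj v b → ω s(w, b) = ω s(v, b) := by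
    intro b hbv hbw hb
    have hbmem : b ∈ G.neighborFinset v \ {w} := by
      simp [SimpleGraph.mem_neighborFinset, hb, hbw]
    exact (htwinω b hbmem).symm
  have hkey2 : ∀ b, b ≠ v → b ≠ w → G.Adj w b → ω s(v, b) = ω s(w, b) := by
    intro b hbv hbw hb
    have hbmem : b ∈ G.neighborFinset v \ {w} := by
      rw [htwinN]
      simp [SimpleGraph.mem_neighborFinset, hb, hbv]
    exact htwinω b hbmem
  have hωadj : ∀ a b : V, G.Adj a b → ω (s(σ a, σ b)) = ω s(a, b) := by
    intro a b hab
    rcases eq_or_ne a v with haveq | hav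
    · rw [haveq] at hab ⊢
      rcases eq_or_ne b w with hbweq | hbw
      · rw [hbweq] at hab ⊢
        simp [hσ, Equiv.swap_apply_left, Equiv.swap_apply_right, Sym2.eq_swap]
      · have hbv : b ≠ v := fun h => G.irrefl (h ▸ hab)
        simp only [hσ, Equiv.swap_apply_left, Equiv.swap_apply_of_ne_of_ne hbv hbw]
        exact hkey1 b hbv hbw hab
    rcases eq_or_ne a w with haweq | haw
    · rw [haweq] at hab ⊢
      rcases eq_or_ne b v with hbveq | hbv
      · rw [hbveq] at hab ⊢
        simp [hσ, Equiv.swap_apply_left, Equiv.swap_apply_right, Sym2.eq_swap]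
      · have hbw : b ≠ w := fun h => G.irrefl (h ▸ hab)
        simp only [hσ, Equiv.swap_apply_right, Equiv.swap_apply_of_ne_of_ne hbv hbw]
        exact hkey2 b hbv hbw hab
    rcases eq_or_ne b v with hbveq | hbv
    · rw [hbveq] at hab ⊢
      simp only [hσ, Equiv.swap_apply_left, Equiv.swap_apply_of_ne_of_ne hav haw]
      rw [Sym2.eq_swap, show s(a, v) = s(v, a) from Sym2.eq_swap]
      exact hkey1 a hav haw hab.symm
    rcases eq_or_ne b w with hbweq | hbw
    · rw [hbweq] at hab ⊢
      simp only [hσ, Equiv.swap_apply_right, Equiv.swap_apply_of_ne_of_ne hav haw]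
      rw [Sym2.eq_swap, show s(a, w) = s(w, a) from Sym2.eq_swap]
      exact hkey2 a hav haw hab.symm
    · simp [hσ, Equiv.swap_apply_of_ne_of_ne hav haw,
        Equiv.swap_apply_of_ne_of_ne hbv hbw]
  set χ' : V → Fin c := fun x => χt (σ x) with hχ'
  have hflipmem : ∀ x, x ∈ flipSet χ χ' ↔ σ x ∈ flipSet χ χt := by
    intro x
    simp only [flipSet, Finset.mem_filter, Finset.mem_univ, true_and, hχ']
    rw [hχσ x]
  have hflipcard : (flipSet χ χ').card = (flipSet χ χt).card := by
    apply Finset.card_bij' (fun x _ => σ x) (fun x _ => σ x)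
    · intro a ha; exact (hflipmem a).mp ha
    · intro a ha; apply (hflipmem (σ a)).mpr; rwa [hσσ]
    · intro a _; exact hσσ a
    · intro a _; exact hσσ a
  have hmem : ∀ a b : V, s(a, b) ∈ properEdges G χ' ↔ s(σ a, σ b) ∈ properEdges G χt := by
    intro a b
    simp only [properEdges, Finset.mem_filter, SimpleGraph.mem_edgeFinset,
      SimpleGraph.mem_edgeSet, hadj, Sym2.map_pair_eq, Sym2.isDiag_iff_proj_eq, hχ']
  have hsum' : (∑ e ∈ properEdges G χ', ω e) = ∑ e ∈ properEdges G χt, ω e := by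
    apply Finset.sum_bij' (fun e _ => Sym2.map σ e) (fun e _ => Sym2.map σ e)
    · intro e he
      induction e using Sym2.ind with
      | _ a b => rw [Sym2.map_pair_eq]; exact (hmem a b).mp he
    · intro e he
      induction e using Sym2.ind with
      | _ a b =>
        rw [Sym2.map_pair_eq]
        apply (hmem (σ a) (σ b)).mpr
        simpa [hσσ] using he
    · intro e _
      induction e using Sym2.ind with
      | _ a b => simp [Sym2.map_pair_eq, hσσ]
    · intro e _
      induction e using Sym2.ind with
      | _ a b => simp [Sym2.map_pair_eq, hσσ]
    · intro e he
      induction e using Sym2.ind with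
      | _ a b =>
        have hab : G.Adj a b := by
          have h' := he
          simp only [properEdges, Finset.mem_filter, SimpleGraph.mem_edgeFinset,
            SimpleGraph.mem_edgeSet] at h'
          exact h'.1
        rw [Sym2.map_pair_eq]
        exact (hωadj a b hab).symm
  refine ⟨χ', ⟨?_, ?_⟩, ?_⟩
  · rw [hflipcard]; exact hcard
  · rw [hsum']; exact hsum
  · apply (hflipmem v).mpr
    simpa [hσ, Equiv.swap_apply_left] using hw
end
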